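/- Let f = X^n + a_{n-1}X^{n-1} + ... + a_1 X + (-1)^n ∈ F_{q^2}[X] be a separable polynomial such that for every root α of f (in an algebraic closure), α^{-q} is also a root. Then a_i = (-1)^n · a_{n-i}^q for all i ≤ n. -/

import Mathlib

open Polynomial

/-- Lemma: let `K` be a field with `q²` elements (`q = p^e` a prime power) and let
`f ∈ K[X]` be a monic separable polynomial of degree `n` with constant coefficient
`(-1)^n`, such that for every root `α` of `f` in an algebraic closure, `α^{-q}` is also
a root. Then the coefficients satisfy `a_i = (-1)^n · a_{n-i}^q` for all `i ≤ n`. -/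
theorem stmt_2 (p e q : ℕ) (hp : p.Prime) (he : 0 < e) (hq : q = p ^ e)
    {K : Type*} [Field K] [Fintype K] (hK : Fintype.card K = q ^ 2)
    (f : Polynomial K) (n : ℕ)
    (hmonic : f.Monic) (hdeg : f.natDegree = n)
    (hsep : f.Separable)
    (hconst : f.coeff 0 = (-1 : K) ^ n)
    (hroots : ∀ α ∈ (f.map (algebraMap K (AlgebraicClosure K))).roots,
      (α⁻¹) ^ q ∈ (f.map (algebraMap K (AlgebraicClosure K))).roots) :
    ∀ i ≤ n, f.coeff i = (-1 : K) ^ n * (f.coeff (n - i)) ^ q := by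
  classical
  -- characteristic
  have hcharK : CharP K p := by
    have h1 : CharP K (ringChar K) := ringChar.charP K
    obtain ⟨m, hrp, hcardr⟩ := FiniteField.card K (ringChar K)
    have hpow : (ringChar K) ^ (m : ℕ) = p ^ (2 * e) := by
      rw [← hcardr, hK, hq, ← pow_mul, mul_comm e 2]
    have hdvd : p ∣ ringChar K ^ (m : ℕ) := hpow ▸ dvd_pow_self p (by positivity)
    have : p = ringChar K := ((Nat.prime_dvd_prime_iff_eq hp hrp).mp
      (hp.dvd_of_dvd_pow hdvd))
    rw [this]; exact h1
  haveI := hcharK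
  set L := AlgebraicClosure K with hL
  set ι : K →+* L := algebraMap K L with hι
  have hιinj : Function.Injective ι := ι.injective
  haveI : CharP L p := charP_of_injective_ringHom hιinj p
  haveI : Fact p.Prime := ⟨hp⟩
  set Φ : L →+* L := iterateFrobenius L p e with hΦ
  have hΦdef : ∀ x : L, Φ x = x ^ q := fun x => by
    rw [hΦ, iterateFrobenius_def, hq]
  have hΦinj : Function.Injective Φ := Φ.injective
  -- sign fact
  have hneg : (-1 : L) ^ q = -1 := by
    rcases eq_or_ne p 2 with hp2 | hp2
    · haveI : CharP L 2 := by rw [← hp2]; infer_instance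
      have h1 : (-1 : L) = 1 := by rw [CharTwo.neg_eq]
      rw [h1, one_pow]
    · have hodd : Odd q := by
        rw [hq]; exact (hp.odd_of_ne_two hp2).pow
      exact hodd.neg_one_pow
  set F : L[X] := f.map ι with hF
  have hFmonic : F.Monic := hmonic.map ι
  have hF0 : F ≠ 0 := hFmonic.ne_zero
  have hFdeg : F.natDegree = n := by rw [hF, hmonic.natDegree_map, hdeg]
  have hFsplits : F.Splits :=
    IsAlgClosed.splits F
  have hcardroots : Multiset.card F.roots = n := by
    rw [← hFdeg]; exact splits_iff_card_roots.mp hFsplits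
  have hnodup : F.roots.Nodup :=
    Polynomial.nodup_roots (Separable.map hsep (f := ι))
  have hFc0 : F.coeff 0 = (-1 : L) ^ n := by
    rw [hF, coeff_map, hconst, map_pow, map_neg, map_one]
  have hsgn : ((-1 : L) ^ n) ≠ 0 := by
    apply pow_ne_zero; exact neg_ne_zero.mpr one_ne_zero
  have hrootne : ∀ β ∈ F.roots, β ≠ 0 := by
    intro β hβ hβ0
    have h := isRoot_of_mem_roots hβ
    rw [hβ0] at h
    have : F.coeff 0 = 0 := by rwa [coeff_zero_eq_eval_zero]
    rw [hFc0] at this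
    exact hsgn this
  -- the twisted reverse polynomial
  set FΦ : L[X] := F.map Φ with hFΦ
  have hFΦmonic : FΦ.Monic := hFmonic.map Φ
  have hFΦ0 : FΦ ≠ 0 := hFΦmonic.ne_zero
  have hFΦdeg : FΦ.natDegree = n := by rw [hFΦ, hFmonic.natDegree_map, hFdeg]
  have hFΦc0 : FΦ.coeff 0 = (-1 : L) ^ n := by
    rw [hFΦ, coeff_map, hFc0, hΦdef, ← pow_mul, mul_comm, pow_mul, hneg]
  set c : L := (-1 : L) ^ n with hc
  set H : L[X] := FΦ.reverse with hH
  have hH0 : H ≠ 0 := by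
    rw [hH, Ne, reverse_eq_zero]; exact hFΦ0
  have hFΦtd : FΦ.natTrailingDegree = 0 := by
    rw [natTrailingDegree_eq_zero]
    right; rw [hFΦc0]; exact hsgn
  have hHdeg : H.natDegree = n := by
    rw [hH, reverse_natDegree, hFΦtd, hFΦdeg, Nat.sub_zero]
  have hHlead : H.leadingCoeff = c := by
    rw [hH, reverse_leadingCoeff, trailingCoeff, hFΦtd, hFΦc0, hc]
  set G : L[X] := C c * H with hG
  have hc2 : c * c = 1 := by
    rw [hc, ← pow_add, ← two_mul, pow_mul, neg_one_sq, one_pow]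
  have hcq : Φ c = c := by
    rw [hΦdef, hc, ← pow_mul, mul_comm, pow_mul, hneg]
  have hG0 : G ≠ 0 := mul_ne_zero (by simpa using hsgn) hH0
  have hGdeg : G.natDegree = n := by
    rw [hG, natDegree_C_mul (by simpa using hsgn), hHdeg]
  have hGlead : G.leadingCoeff = 1 := by
    rw [hG, leadingCoeff_mul, leadingCoeff_C, hHlead, hc2]
  -- roots of F are roots of G
  have hGroot : ∀ β ∈ F.roots, G.eval ((β⁻¹) ^ q) = 0 := by
    intro β hβ
    have hβne : β ≠ 0 := hrootne β hβ
    have hβroot : F.eval β = 0 := isRoot_of_mem_roots hβ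
    set y : L := Φ β with hy
    have hyne : y ≠ 0 := fun h => hβne (hΦinj (by rw [map_zero]; exact h))
    have hx : (β⁻¹) ^ q = y⁻¹ := by
      rw [hy, hΦdef, inv_pow]
    haveI : Invertible y := invertibleOfNonzero hyne
    have hev : FΦ.eval y = 0 := by
      rw [hFΦ, hy, eval_map, eval₂_at_apply, hβroot, map_zero]
    have hrev : H.eval y⁻¹ = 0 := by
      have := (eval₂_reverse_eq_zero_iff (RingHom.id L) y FΦ).mpr (by
        rwa [eval₂_eq_eval_map, Polynomial.map_id])
      rwa [← hH, eval₂_eq_eval_map, Polynomial.map_id, invOf_eq_inv] at this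
    rw [hx, hG, eval_mul, eval_C, hrev, mul_zero]
  -- surjectivity of the root map
  set s : Finset L := F.roots.toFinset with hs
  have hmapsto : ∀ β ∈ s, (β⁻¹) ^ q ∈ s := by
    intro β hβ
    rw [hs, Multiset.mem_toFinset] at hβ ⊢
    exact hroots β hβ
  have hinj : ∀ a₁ a₂, a₁ ∈ s → a₂ ∈ s → (a₁⁻¹) ^ q = (a₂⁻¹) ^ q → a₁ = a₂ := by
    intro a₁ a₂ h₁ h₂ h
    rw [← hΦdef, ← hΦdef] at h
    have := hΦinj h
    exact inv_injective this
  have hsurj := Finset.surj_on_of_inj_on_of_card_le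
    (s := s) (t := s) (fun a _ => (a⁻¹) ^ q) (fun a ha => hmapsto a ha)
    hinj le_rfl
  -- F.roots ⊆ G.roots
  have hsub : F.roots ≤ G.roots := by
    rw [Multiset.le_iff_subset hnodup]
    intro α hα
    obtain ⟨β, hβs, hβeq⟩ := hsurj α (by rwa [hs, Multiset.mem_toFinset])
    have hβroots : β ∈ F.roots := by rwa [hs, Multiset.mem_toFinset] at hβs
    rw [mem_roots hG0, IsRoot, hβeq]
    exact hGroot β hβroots
  -- F divides G, hence F = G
  have hFprod : F = (F.roots.map fun a => X - C a).prod :=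
    hFsplits.eq_prod_roots_of_monic hFmonic
  have hFdvdG : F ∣ G := by
    rw [hFprod]
    exact (Multiset.prod_X_sub_C_dvd_iff_le_roots hG0 _).mpr hsub
  have hFG : F = G := by
    refine eq_of_dvd_of_natDegree_le_of_leadingCoeff hFdvdG ?_ ?_
    · rw [hGdeg, hFdeg]
    · rw [hFmonic.leadingCoeff, hGlead]
  -- extract coefficients
  intro i hi
  apply hιinj
  have h1 : ι (f.coeff i) = F.coeff i := by rw [hF, coeff_map]
  have h2 : G.coeff i = c * FΦ.coeff (n - i) := by
    rw [hG, coeff_C_mul, hH, coeff_reverse, hFΦdeg, revAt_le hi]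
  have h3 : FΦ.coeff (n - i) = (ι (f.coeff (n - i))) ^ q := by
    rw [hFΦ, coeff_map, ← hΦdef, hF, coeff_map]
  rw [h1, hFG, h2, h3, map_mul, map_pow, map_pow, map_neg, map_one]
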